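/- Let k, d be positive integers with k dividing d and set t = d/k. There exists n₀ = n₀(d,k) such that for every n ≥ n₀, the only k-wise (n−d)-union family 𝒜 of subsets of [n] with |𝒜| = Σ_{i=0}^{t} C(n, i) is the family of all subsets of [n] of size at most t. -/

import Mathlib

/-- A set `Y` is shattered by the family `F` if every subset of `Y`
is the trace of some member of `F` on `Y`. -/
def Shatters {α : Type*} [DecidableEq α] (F : Finset (Finset α)) (Y : Finset α) : Prop :=
  ∀ T ⊆ Y, ∃ S ∈ F, S ∩ Y = T

/-- The VC dimension of a family: the largest cardinality of a shattered set. -/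
noncomputable def vcDim {α : Type*} [DecidableEq α] (F : Finset (Finset α)) : ℕ :=
  sSup {m | ∃ Y : Finset α, Shatters F Y ∧ Y.card = m}

/-- `S₁ △ S₂ △ ⋯ △ S_k` for a `k`-tuple of sets. -/
def symmDiffAll {α : Type*} [DecidableEq α] {k : ℕ} (f : Fin k → Finset α) : Finset α :=
  (List.ofFn f).foldr symmDiff ∅

/-- The `k`-fold symmetric difference family `△𝒜^k`. -/
def symmDiffFam {α : Type*} [DecidableEq α] (k : ℕ) (A : Finset (Finset α)) :
    Finset (Finset α) :=
  (Fintype.piFinset fun _ : Fin k => A).image symmDiffAll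

/-- The family `𝒜₁ △ ⋯ △ 𝒜ₖ`. -/
def symmDiffFamMulti {α : Type*} [DecidableEq α] {k : ℕ} (A : Fin k → Finset (Finset α)) :
    Finset (Finset α) :=
  (Fintype.piFinset A).image symmDiffAll

/-- A family is `k`-wise `(n-d)`-union if any `k` of its members have union of size `≤ d`. -/
def KwiseUnion {α : Type*} [DecidableEq α] (k d : ℕ) (A : Finset (Finset α)) : Prop :=
  ∀ f : Fin k → Finset α, (∀ i, f i ∈ A) → (Finset.univ.sup f).card ≤ d

/-- The `i`-compression of a family. -/
def compress {α : Type*} [DecidableEq α] (i : α) (A : Finset (Finset α)) :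
    Finset (Finset α) :=
  A.image fun S => if S ∈ A ∧ S.erase i ∈ A then S else S.erase i

/-- The `(i,j)`-shift of a family. -/
def shiftIJ {α : Type*} [DecidableEq α] (i j : α) (A : Finset (Finset α)) :
    Finset (Finset α) :=
  A.image fun S => if i ∉ S ∧ j ∈ S ∧ insert i (S.erase j) ∉ A then insert i (S.erase j) else S

/-- `p(n,k,d)`: the maximum size of a `k`-wise `(n-d)`-union family on `[n]`. -/
noncomputable def pMax (n k d : ℕ) : ℕ :=
  sSup {m | ∃ F : Finset (Finset (Fin n)), KwiseUnion k d F ∧ F.card = m}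


open Finset

lemma card_filter_card_le (n t : ℕ) :
    (Finset.univ.filter fun S : Finset (Fin n) => S.card ≤ t).card
      = ∑ i ∈ Finset.range (t+1), n.choose i := by
  classical
  have h : (Finset.univ.filter fun S : Finset (Fin n) => S.card ≤ t)
      = (Finset.range (t+1)).biUnion (fun i => Finset.powersetCard i Finset.univ) := by
    ext S
    simp [Nat.lt_succ_iff]
  rw [h, Finset.card_biUnion]
  · simp [Finset.card_powersetCard]
  · intro i hi j hj hij
    refine Finset.disjoint_left.2 fun S hS hS' => hij ?_
    simp only [Finset.mem_powersetCard] at hS hS'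
    omega

lemma mem_card_le {n k d : ℕ} (hk : 0 < k) {A : Finset (Finset (Fin n))}
    (hA : KwiseUnion k d A) {S : Finset (Fin n)} (hS : S ∈ A) : S.card ≤ d := by
  have : Nonempty (Fin k) := ⟨⟨0, hk⟩⟩
  have h := hA (fun _ => S) (fun _ => hS)
  rwa [Finset.sup_const Finset.univ_nonempty] at h

/-- If some `S ∈ A` is large, the traces outside `S` form a `(k-1)`-wise union family. -/
lemma kwise_sdiff {n k d : ℕ} {A : Finset (Finset (Fin n))}
    (hA : KwiseUnion (k+1) d A) {S : Finset (Fin n)} (hS : S ∈ A) :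
    KwiseUnion k (d - S.card) (A.image (· \ S)) := by
  classical
  intro g hg
  have hT : ∀ i, ∃ T ∈ A, T \ S = g i := by
    intro i
    simpa [Finset.mem_image] using hg i
  choose T hTA hTg using hT
  set f : Fin (k+1) → Finset (Fin n) := Fin.cons S T with hf
  have hfA : ∀ i, f i ∈ A := by
    intro i
    refine Fin.cases ?_ ?_ i <;> simp [hf, hS, hTA]
  have hfd := hA f hfA
  have hSsub : S ⊆ Finset.univ.sup f := by
    have : f 0 ≤ Finset.univ.sup f := Finset.le_sup (Finset.mem_univ 0)
    simpa [hf] using this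
  have hsub : Finset.univ.sup g ≤ (Finset.univ.sup f) \ S := by
    refine Finset.sup_le fun i _ => ?_
    show (g i : Finset (Fin n)) ⊆ (Finset.univ.sup f) \ S
    rw [← hTg i]
    refine Finset.sdiff_subset_sdiff ?_ le_rfl
    have : f i.succ ≤ Finset.univ.sup f := Finset.le_sup (Finset.mem_univ i.succ)
    simpa [hf] using this
  calc (Finset.univ.sup g).card ≤ ((Finset.univ.sup f) \ S).card := Finset.card_le_card hsub
    _ = (Finset.univ.sup f).card - S.card := Finset.card_sdiff_of_subset hSsub
    _ ≤ d - S.card := Nat.sub_le_sub_right hfd _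

/-- Splitting a family along a set `S`. -/
lemma card_le_via_sdiff {n : ℕ} (A : Finset (Finset (Fin n))) (S : Finset (Fin n)) :
    A.card ≤ 2 ^ S.card * (A.image (· \ S)).card := by
  classical
  have h : A.card ≤ (S.powerset ×ˢ (A.image (· \ S))).card := by
    refine Finset.card_le_card_of_injOn (fun T => (T ∩ S, T \ S)) ?_ ?_
    · intro T hT
      simp only [Finset.mem_coe, Finset.mem_product, Finset.mem_powerset, Finset.mem_image]
      exact ⟨Finset.inter_subset_right, T, hT, rfl⟩
    · intro T1 _ T2 _ h
      have h1 : T1 ∩ S = T2 ∩ S := congrArg Prod.fst h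
      have h2 : T1 \ S = T2 \ S := congrArg Prod.snd h
      ext a
      by_cases ha : a ∈ S
      · have := Finset.ext_iff.1 h1 a
        simp only [Finset.mem_inter, ha, and_true] at this
        exact this
      · have := Finset.ext_iff.1 h2 a
        simp only [Finset.mem_sdiff, ha, not_false_iff, and_true] at this
        exact this
  simpa [Finset.card_product, Finset.card_powerset] using h

/-- Polynomial upper bound for `k`-wise `d`-union families. -/
lemma kwise_bound : ∀ k, 1 ≤ k → ∀ d : ℕ, ∃ c : ℕ,
    ∀ n : ℕ, ∀ A : Finset (Finset (Fin n)),
      KwiseUnion k d A → A.card ≤ c * (n+1) ^ (d / k) := by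
  intro k hk
  induction k, hk using Nat.le_induction with
  | base =>
    intro d
    refine ⟨d + 1, fun n A hA => ?_⟩
    classical
    have hsub : A ⊆ Finset.univ.filter fun S : Finset (Fin n) => S.card ≤ d :=
      fun S hS => Finset.mem_filter.2 ⟨Finset.mem_univ _, mem_card_le one_pos hA hS⟩
    calc A.card ≤ _ := Finset.card_le_card hsub
      _ = ∑ i ∈ Finset.range (d+1), n.choose i := card_filter_card_le n d
      _ ≤ ∑ i ∈ Finset.range (d+1), (n+1) ^ d := by
          refine Finset.sum_le_sum fun i hi => ?_
          calc n.choose i ≤ n ^ i := Nat.choose_le_pow n i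
            _ ≤ (n+1) ^ i := Nat.pow_le_pow_left (Nat.le_succ n) i
            _ ≤ (n+1) ^ d := Nat.pow_le_pow_right (Nat.succ_pos n) (by
                simpa [Nat.lt_succ_iff] using hi)
      _ = (d + 1) * (n+1) ^ d := by simp [Finset.sum_const, Finset.card_range]
      _ = (d + 1) * (n+1) ^ (d / 1) := by rw [Nat.div_one]
  | succ k hk ih =>
    intro d
    set t := d / (k+1) with ht
    obtain ⟨c, hc⟩ := ih (d - t - 1)
    refine ⟨(t + 1) + 2 ^ d * c, fun n A hA => ?_⟩
    classical
    by_cases hbig : ∃ S ∈ A, t < S.card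
    · obtain ⟨S, hSA, hSt⟩ := hbig
      have hSd : S.card ≤ d := mem_card_le (Nat.succ_pos k) hA hSA
      have hA' := kwise_sdiff hA hSA
      have hA'' : KwiseUnion k (d - t - 1) (A.image (· \ S)) := by
        intro g hg
        calc (Finset.univ.sup g).card ≤ d - S.card := hA' g hg
          _ ≤ d - t - 1 := by omega
      have hdiv : (d - t - 1) / k ≤ t := by
        have h1 : d < (t + 1) * (k + 1) :=
          (Nat.div_lt_iff_lt_mul (Nat.succ_pos k)).1 (Nat.lt_succ_self t)
        have e : (t + 1) * (k + 1) = k * (t + 1) + (t + 1) := by ring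
        have h2 : d - t - 1 < k * (t + 1) := by omega
        exact Nat.lt_succ_iff.mp (Nat.div_lt_of_lt_mul h2)
      calc A.card ≤ 2 ^ S.card * (A.image (· \ S)).card := card_le_via_sdiff A S
        _ ≤ 2 ^ d * (c * (n+1) ^ ((d - t - 1) / k)) := by
            exact Nat.mul_le_mul (Nat.pow_le_pow_right (by norm_num) hSd) (hc n _ hA'')
        _ ≤ 2 ^ d * (c * (n+1) ^ t) := by
            exact Nat.mul_le_mul_left _ (Nat.mul_le_mul_left _
              (Nat.pow_le_pow_right (Nat.succ_pos n) hdiv))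
        _ = 2 ^ d * c * (n+1) ^ t := by ring
        _ ≤ ((t + 1) + 2 ^ d * c) * (n+1) ^ t := Nat.mul_le_mul_right _ (Nat.le_add_left _ _)
    · push_neg at hbig
      have hsub : A ⊆ Finset.univ.filter fun S : Finset (Fin n) => S.card ≤ t :=
        fun S hS => Finset.mem_filter.2 ⟨Finset.mem_univ _, hbig S hS⟩
      calc A.card ≤ _ := Finset.card_le_card hsub
        _ = ∑ i ∈ Finset.range (t+1), n.choose i := card_filter_card_le n t
        _ ≤ ∑ i ∈ Finset.range (t+1), (n+1) ^ t := by
            refine Finset.sum_le_sum fun i hi => ?_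
            calc n.choose i ≤ n ^ i := Nat.choose_le_pow n i
              _ ≤ (n+1) ^ i := Nat.pow_le_pow_left (Nat.le_succ n) i
              _ ≤ (n+1) ^ t := Nat.pow_le_pow_right (Nat.succ_pos n) (by
                  simpa [Nat.lt_succ_iff] using hi)
        _ = (t + 1) * (n+1) ^ t := by simp [Finset.sum_const, Finset.card_range]
        _ ≤ ((t + 1) + 2 ^ d * c) * (n+1) ^ t := Nat.mul_le_mul_right _ (Nat.le_add_right _ _)

/-- for `k ∣ d`, `t = d/k`, there is `n₀(d,k)` such that for `n ≥ n₀` the only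
`k`-wise `(n−d)`-union family on `[n]` of size `∑_{i=0}^{t} C(n,i)` is `{S : |S| ≤ t}`. -/
theorem statement9 (k d : ℕ) (hk : 0 < k) (hd : 0 < d) (hkd : k ∣ d) :
    ∃ n₀ : ℕ, ∀ n : ℕ, n₀ ≤ n → ∀ A : Finset (Finset (Fin n)),
      KwiseUnion k d A → A.card = ∑ i ∈ Finset.range (d / k + 1), n.choose i →
      A = Finset.univ.filter (fun S : Finset (Fin n) => S.card ≤ d / k) := by
  classical
  obtain ⟨t, rfl⟩ := hkd
  have htpos : 0 < t := Nat.pos_of_ne_zero fun h => by subst h; simp at hd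
  have htk : k * t / k = t := Nat.mul_div_cancel_left t hk
  rw [htk]
  rcases Nat.lt_or_ge k 2 with hk1 | hk2
  · have hk1' : k = 1 := by omega
    subst hk1'
    refine ⟨0, fun n _ A hA hcard => ?_⟩
    have hsub : A ⊆ Finset.univ.filter fun S : Finset (Fin n) => S.card ≤ t := by
      intro S hS
      refine Finset.mem_filter.2 ⟨Finset.mem_univ _, ?_⟩
      have := mem_card_le one_pos hA hS
      omega
    exact Finset.eq_of_subset_of_card_le hsub (by rw [card_filter_card_le, hcard])
  · obtain ⟨m, rfl⟩ : ∃ m, k = m + 2 := ⟨k - 2, by omega⟩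
    obtain ⟨c, hc⟩ := kwise_bound (m+1) (Nat.le_add_left 1 m) ((m+2)*t - t - 1)
    refine ⟨t^t * 2^((m+2)*t) * c * 2^(t-1) + 2*t, fun n hn A hA hcard => ?_⟩
    set K := t^t * 2^((m+2)*t) * c * 2^(t-1) with hK
    have hsub : A ⊆ Finset.univ.filter fun S : Finset (Fin n) => S.card ≤ t := by
      intro S hS
      refine Finset.mem_filter.2 ⟨Finset.mem_univ _, ?_⟩
      by_contra hbig
      push_neg at hbig
      have hSd : S.card ≤ (m+2)*t := mem_card_le (Nat.succ_pos _) hA hS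
      have hA' := kwise_sdiff (k := m+1) hA hS
      have hA'' : KwiseUnion (m+1) ((m+2)*t - t - 1) (A.image (· \ S)) := by
        intro g hg
        have := hA' g hg
        omega
      have hexp : ((m+2)*t - t - 1) / (m+1) ≤ t - 1 := by
        have e : (m+2)*t = (m+1)*t + t := by ring
        have e2 : t ≤ (m+1)*t := Nat.le_mul_of_pos_left t (Nat.succ_pos m)
        have hlt : (m+2)*t - t - 1 < (m+1) * t := by omega
        have := Nat.div_lt_of_lt_mul hlt
        omega
      have hupper : A.card ≤ 2^((m+2)*t) * c * (n+1)^(t-1) := by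
        calc A.card ≤ 2 ^ S.card * (A.image (· \ S)).card := card_le_via_sdiff A S
          _ ≤ 2 ^ ((m+2)*t) * (c * (n+1) ^ (((m+2)*t - t - 1)/(m+1))) :=
              Nat.mul_le_mul (Nat.pow_le_pow_right (by norm_num) hSd) (hc n _ hA'')
          _ ≤ 2 ^ ((m+2)*t) * (c * (n+1)^(t-1)) :=
              Nat.mul_le_mul_left _ (Nat.mul_le_mul_left _
                (Nat.pow_le_pow_right (Nat.succ_pos n) hexp))
          _ = 2^((m+2)*t) * c * (n+1)^(t-1) := (mul_assoc _ _ _).symm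
      have hlow : n.choose t ≤ A.card := by
        rw [hcard]
        exact Finset.single_le_sum (fun i _ => Nat.zero_le _)
          (Finset.mem_range.2 (Nat.lt_succ_self t))
      have p1 : (n+1-t)^t ≤ t^t * n.choose t := by
        calc (n+1-t)^t ≤ n.descFactorial t := Nat.pow_sub_le_descFactorial n t
          _ = Nat.factorial t * n.choose t := Nat.descFactorial_eq_factorial_mul_choose n t
          _ ≤ t^t * n.choose t := Nat.mul_le_mul_right _ (Nat.factorial_le_pow t)
      have p3 : (n+1)^(t-1) ≤ 2^(t-1) * (n+1-t)^(t-1) := by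
        calc (n+1)^(t-1) ≤ (2*(n+1-t))^(t-1) := Nat.pow_le_pow_left (by omega) _
          _ = 2^(t-1) * (n+1-t)^(t-1) := mul_pow _ _ _
      have p5 : K * (n+1-t)^(t-1) < (n+1-t)^t := by
        have hpos : 0 < (n+1-t)^(t-1) := Nat.pow_pos (by omega)
        have e2 : (n+1-t)^(t-1+1) = (n+1-t)^t := by rw [Nat.sub_add_cancel htpos]
        calc K * (n+1-t)^(t-1) < (K+1) * (n+1-t)^(t-1) :=
              mul_lt_mul_of_pos_right (Nat.lt_succ_self K) hpos
          _ ≤ (n+1-t) * (n+1-t)^(t-1) := Nat.mul_le_mul_right _ (by omega)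
          _ = (n+1-t)^t := by rw [← e2, pow_succ, mul_comm]
      have p4 : t^t * (2^((m+2)*t) * c * (n+1)^(t-1)) ≤ K * (n+1-t)^(t-1) := by
        calc t^t * (2^((m+2)*t) * c * (n+1)^(t-1))
            ≤ t^t * (2^((m+2)*t) * c * (2^(t-1) * (n+1-t)^(t-1))) :=
              Nat.mul_le_mul_left _ (Nat.mul_le_mul_left _ p3)
          _ = K * (n+1-t)^(t-1) := by rw [hK]; ring
      have hlt2 : t^t * (2^((m+2)*t) * c * (n+1)^(t-1)) < t^t * n.choose t :=
        lt_of_le_of_lt p4 (lt_of_lt_of_le p5 p1)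
      have hfin : 2^((m+2)*t) * c * (n+1)^(t-1) < n.choose t :=
        Nat.lt_of_mul_lt_mul_left hlt2
      omega
    exact Finset.eq_of_subset_of_card_le hsub (by rw [card_filter_card_le, hcard])
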